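/- There is a bijection between the set of (k+1)-cores of length m (cores whose cells with hook length at most k number exactly m) and the set of partitions of m with all parts at most k. -/

import Mathlib

def YoungDiagram.hook (μ : YoungDiagram) (c : ℕ × ℕ) : ℕ :=
  (μ.rowLen c.1 - c.2) + (μ.colLen c.2 - c.1) - 1

def YoungDiagram.IsCore (r : ℕ) (μ : YoungDiagram) : Prop :=
  ∀ c ∈ μ.cells, μ.hook c ≠ r

def YoungDiagram.coreLength (k : ℕ) (μ : YoungDiagram) : ℕ :=
  (μ.cells.filter fun c => μ.hook c ≤ k).card

namespace CoreBij

open YoungDiagram Finset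

noncomputable section
open scoped Classical

/-- beta sequence of a Young diagram -/
def bs (μ : YoungDiagram) (i : ℕ) : ℤ := (μ.rowLen i : ℤ) - i

/-- complementary sequence -/
def ys (μ : YoungDiagram) (j : ℕ) : ℤ := (j : ℤ) + 1 - μ.colLen j

def Sset (μ : YoungDiagram) : Set ℤ := Set.range (bs μ)

lemma bs_strictAnti (μ : YoungDiagram) : StrictAnti (bs μ) := by
  intro a b hab
  have h := μ.rowLen_anti a b hab.le
  unfold bs
  omega

lemma rowLen_eq_zero_of (μ : YoungDiagram) {i : ℕ} (h : μ.colLen 0 ≤ i) : μ.rowLen i = 0 := by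
  by_contra hpos
  have : (i, 0) ∈ μ := mem_iff_lt_rowLen.mpr (by omega)
  have := mem_iff_lt_colLen.mp this
  omega

lemma colLen_eq_zero_of (μ : YoungDiagram) {j : ℕ} (h : μ.rowLen 0 ≤ j) : μ.colLen j = 0 := by
  by_contra hpos
  have : (0, j) ∈ μ := mem_iff_lt_colLen.mpr (by omega)
  have := mem_iff_lt_rowLen.mp this
  omega

lemma bs_eq_neg (μ : YoungDiagram) {i : ℕ} (h : μ.colLen 0 ≤ i) : bs μ i = -(i : ℤ) := by
  unfold bs; rw [rowLen_eq_zero_of μ h]; simp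

lemma bs_ne_ys (μ : YoungDiagram) (l j : ℕ) : bs μ l ≠ ys μ j := by
  intro h
  unfold bs ys at h
  rcases lt_or_ge j (μ.rowLen l) with hj | hj
  · have hc : l < μ.colLen j := mem_iff_lt_colLen.mp (mem_iff_lt_rowLen.mpr hj)
    omega
  · have hc : μ.colLen j ≤ l := by
      by_contra hc
      push_neg at hc
      have := mem_iff_lt_rowLen.mp (mem_iff_lt_colLen.mpr hc)
      omega
    omega

lemma ys_lt_bs_iff (μ : YoungDiagram) (i j : ℕ) : ys μ j < bs μ i ↔ j < μ.rowLen i := by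
  constructor
  · intro h
    by_contra hj
    push_neg at hj
    have hc : μ.colLen j ≤ i := by
      by_contra hc
      push_neg at hc
      have := mem_iff_lt_rowLen.mp (mem_iff_lt_colLen.mpr hc)
      omega
    unfold ys bs at h; omega
  · intro h
    have hc : i < μ.colLen j := mem_iff_lt_colLen.mp (mem_iff_lt_rowLen.mpr h)
    unfold ys bs; omega

lemma cover (μ : YoungDiagram) (x : ℤ) : x ∈ Sset μ ∨ ∃ j, ys μ j = x := by
  by_cases hS : x ∈ Sset μ
  · exact Or.inl hS
  right
  have hS' : ∀ l, bs μ l ≠ x := by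
    intro l hl; exact hS ⟨l, hl⟩
  rcases le_or_gt x (bs μ 0) with hx | hx
  · have h0 : x < bs μ 0 := lt_of_le_of_ne hx (Ne.symm (hS' 0))
    have hex : ∃ i, bs μ i < x := by
      refine ⟨μ.colLen 0 + x.natAbs + 1, ?_⟩
      rw [bs_eq_neg μ (by omega)]
      omega
    classical
    set i₀ := Nat.find hex with hi₀def
    have hi₀ : bs μ i₀ < x := Nat.find_spec hex
    have hpos : i₀ ≠ 0 := by
      intro h; rw [h] at hi₀; omega
    obtain ⟨i₁, hi₁⟩ : ∃ i₁, i₀ = i₁ + 1 := ⟨i₀ - 1, by omega⟩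
    have hprev : ¬ bs μ i₁ < x := Nat.find_min hex (by omega)
    push_neg at hprev
    have hgt : x < bs μ i₁ := lt_of_le_of_ne hprev (hS' i₁).symm
    have hi₀' : bs μ (i₁ + 1) < x := by rw [← hi₁]; exact hi₀
    have hj0 : 0 ≤ x + i₁ := by unfold bs at hi₀'; omega
    refine ⟨(x + i₁).toNat, ?_⟩
    have htn : ((x + i₁).toNat : ℤ) = x + i₁ := Int.toNat_of_nonneg hj0
    have hcol : μ.colLen (x + i₁).toNat = i₁ + 1 := by
      have h1 : (i₁, (x + i₁).toNat) ∈ μ := by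
        rw [mem_iff_lt_rowLen]
        unfold bs at hgt; omega
      have h2 : (i₁ + 1, (x + i₁).toNat) ∉ μ := by
        rw [mem_iff_lt_rowLen]
        unfold bs at hi₀'; omega
      rw [mem_iff_lt_colLen] at h1 h2
      omega
    unfold ys
    rw [hcol, htn]
    push_cast
    ring
  · have hx1 : (1 : ℤ) ≤ x := by
      have : (0:ℤ) ≤ bs μ 0 := by unfold bs; omega
      omega
    refine ⟨(x - 1).toNat, ?_⟩
    have htn : (((x:ℤ) - 1).toNat : ℤ) = x - 1 := Int.toNat_of_nonneg (by omega)
    have hcl : μ.colLen (x - 1).toNat = 0 := by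
      apply colLen_eq_zero_of
      unfold bs at hx; omega
    unfold ys
    rw [hcl, htn]
    push_cast
    ring

lemma hook_cast (μ : YoungDiagram) {i j : ℕ} (h : (i, j) ∈ μ) :
    (μ.hook (i, j) : ℤ) = bs μ i - ys μ j := by
  have h1 : j < μ.rowLen i := mem_iff_lt_rowLen.mp h
  have h2 : i < μ.colLen j := mem_iff_lt_colLen.mp h
  unfold YoungDiagram.hook bs ys
  simp only
  omega

lemma isCore_iff (k : ℕ) (μ : YoungDiagram) :
    μ.IsCore (k + 1) ↔ ∀ l, bs μ l - (k + 1) ∈ Sset μ := by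
  constructor
  · intro hc l
    rcases cover μ (bs μ l - (k+1)) with h | ⟨j, hj⟩
    · exact h
    exfalso
    have hjl : j < μ.rowLen l := by
      rw [← ys_lt_bs_iff]
      omega
    have hmem : (l, j) ∈ μ := mem_iff_lt_rowLen.mpr hjl
    have := hook_cast μ hmem
    have : μ.hook (l, j) = k + 1 := by omega
    exact hc (l, j) ((mem_cells _).mpr hmem) this
  · intro hs c hc hk
    obtain ⟨i, j⟩ := c
    rw [mem_cells] at hc
    have hcast := hook_cast μ hc
    obtain ⟨l, hl⟩ := hs i
    have hkz : (μ.hook (i, j) : ℤ) = (k : ℤ) + 1 := by rw [hk]; push_cast; ring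
    have : bs μ l = ys μ j := by omega
    exact bs_ne_ys μ l j this

/-- number of cells in row `i` with hook length at most `k` -/
def rowcount (k : ℕ) (μ : YoungDiagram) (i : ℕ) : ℕ :=
  (μ.cells.filter fun c => c.1 = i ∧ μ.hook c ≤ k).card

lemma rowcount_eq_window (k : ℕ) (μ : YoungDiagram) (i : ℕ) :
    rowcount k μ i
      = ((Finset.Icc (bs μ i - k) (bs μ i - 1)).filter (fun x => x ∉ Sset μ)).card := by
  unfold rowcount
  apply Finset.card_bij (fun c _ => ys μ c.2)
  · rintro ⟨i', j⟩ hc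
    simp only [Finset.mem_filter, mem_cells] at hc
    obtain ⟨hmem, rfl, hhook⟩ := hc
    have h1 : j < μ.rowLen i' := mem_iff_lt_rowLen.mp hmem
    have hcast := hook_cast μ hmem
    have hge : 1 ≤ μ.hook (i', j) := by
      have := (ys_lt_bs_iff μ i' j).mpr h1
      omega
    simp only [Finset.mem_filter, Finset.mem_Icc]
    refine ⟨⟨by omega, by omega⟩, ?_⟩
    rintro ⟨l, hl⟩
    exact bs_ne_ys μ l j hl
  · rintro ⟨i1, j1⟩ h1 ⟨i2, j2⟩ h2 heq
    simp only [Finset.mem_filter, mem_cells] at h1 h2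
    dsimp only at heq
    have : j1 = j2 := by
      by_contra hne
      rcases Nat.lt_or_ge j1 j2 with h | h
      · have : ys μ j1 < ys μ j2 := by
          unfold ys
          have := μ.colLen_anti j1 j2 h.le
          omega
        omega
      · have hlt : j2 < j1 := by omega
        have : ys μ j2 < ys μ j1 := by
          unfold ys
          have := μ.colLen_anti j2 j1 hlt.le
          omega
        omega
    cases this
    rw [Prod.mk.injEq]
    exact ⟨h1.2.1.trans h2.2.1.symm, rfl⟩
  · intro x hx
    simp only [Finset.mem_filter, Finset.mem_Icc] at hx
    obtain ⟨⟨hx1, hx2⟩, hxS⟩ := hx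
    rcases cover μ x with h | ⟨j, hj⟩
    · exact absurd h hxS
    have hjr : j < μ.rowLen i := by rw [← ys_lt_bs_iff]; omega
    have hmem : (i, j) ∈ μ := mem_iff_lt_rowLen.mpr hjr
    refine ⟨(i, j), ?_, hj⟩
    rw [Finset.mem_filter, mem_cells]
    refine ⟨hmem, rfl, ?_⟩
    have := hook_cast μ hmem
    omega


/-! ### Abstract lemmas about shift-closed subsets of ℤ -/

variable {k : ℕ}

def ShiftClosed (k : ℕ) (T : Set ℤ) : Prop := ∀ t ∈ T, t - ((k : ℤ) + 1) ∈ T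

structure Adm (k : ℕ) (T : Set ℤ) : Prop where
  sc : ShiftClosed k T
  low : ∃ M : ℤ, ∀ x ≤ M, x ∈ T
  ub : ∃ M : ℤ, ∀ t ∈ T, t ≤ M

lemma shift_mul {T : Set ℤ} (h : ShiftClosed k T) {t : ℤ} (ht : t ∈ T) (n : ℕ) :
    t - ((k : ℤ) + 1) * n ∈ T := by
  induction n with
  | zero => simpa using ht
  | succ n ih =>
      have h2 := h _ ih
      have he : t - ((k:ℤ)+1) * ((n : ℕ) + 1 : ℕ) = (t - ((k:ℤ)+1) * n) - ((k:ℤ)+1) := by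
        push_cast; ring
      rw [he]
      exact h2

lemma shift_dvd_le {T : Set ℤ} (h : ShiftClosed k T) {t x : ℤ} (ht : t ∈ T)
    (hd : ((k : ℤ) + 1) ∣ (t - x)) (hx : x ≤ t) : x ∈ T := by
  obtain ⟨c, hc⟩ := hd
  have hpos : (0:ℤ) < (k:ℤ) + 1 := by positivity
  have hc0 : 0 ≤ c := by
    by_contra hneg
    push_neg at hneg
    have : ((k:ℤ)+1) * c < 0 := mul_neg_of_pos_of_neg hpos hneg
    omega
  obtain ⟨n, rfl⟩ : ∃ n : ℕ, c = (n : ℤ) := ⟨c.toNat, (Int.toNat_of_nonneg hc0).symm⟩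
  have hx' : x = t - ((k:ℤ)+1) * n := by omega
  rw [hx']
  exact shift_mul h ht n

/-- the congruent representative: `resrep k a x` is the element of `[a - k, a]` congruent
to `x` mod `k+1`. -/
def resrep (k : ℕ) (a x : ℤ) : ℤ := (a - k) + (x - (a - k)) % ((k : ℤ) + 1)

lemma resrep_mem {a x : ℤ} : a - k ≤ resrep k a x ∧ resrep k a x ≤ a := by
  unfold resrep
  have h1 : 0 ≤ (x - (a - k)) % ((k:ℤ) + 1) := Int.emod_nonneg _ (by positivity)
  have h2 : (x - (a - k)) % ((k:ℤ) + 1) < (k:ℤ) + 1 := Int.emod_lt_of_pos _ (by positivity)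
  omega

lemma resrep_dvd {a x : ℤ} : ((k : ℤ) + 1) ∣ (x - resrep k a x) := by
  unfold resrep
  have h := Int.mul_ediv_add_emod (x - (a - k)) ((k:ℤ) + 1)
  exact ⟨(x - (a - k)) / ((k:ℤ) + 1), by omega⟩

lemma eq_of_dvd_of_close {d x y : ℤ} (hd : 0 < d) (h : d ∣ x - y) (h1 : x - y < d)
    (h2 : y - x < d) : x = y := by
  obtain ⟨c, hc⟩ := h
  rcases lt_trichotomy c 0 with hc0 | hc0 | hc0
  · nlinarith
  · rw [hc0, mul_zero] at hc; omega
  · nlinarith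

lemma resrep_le {a x : ℤ} (h : a - k ≤ x) : resrep k a x ≤ x := by
  unfold resrep
  have h1 : (0:ℤ) ≤ x - (a - k) := by omega
  have hpos : (0:ℤ) < (k:ℤ) + 1 := by positivity
  have hq : 0 ≤ (x - (a - k)) / ((k:ℤ)+1) := Int.ediv_nonneg h1 hpos.le
  have hmul : 0 ≤ ((k:ℤ)+1) * ((x - (a - k)) / ((k:ℤ)+1)) := mul_nonneg hpos.le hq
  have he := Int.mul_ediv_add_emod (x - (a - k)) ((k:ℤ)+1)
  omega

lemma count_window_anti {T : Set ℤ} (hT : ShiftClosed k T) {a a' : ℤ} (h : a ≤ a') :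
    ((Finset.Icc (a' - k) a').filter (fun x => x ∈ T)).card
      ≤ ((Finset.Icc (a - k) a).filter (fun x => x ∈ T)).card := by
  apply Finset.card_le_card_of_injOn (fun x => resrep k a x)
  · intro x hx
    simp only [Finset.mem_coe, Finset.mem_filter, Finset.mem_Icc] at hx ⊢
    obtain ⟨⟨hx1, hx2⟩, hxT⟩ := hx
    have hm := resrep_mem (k := k) (a := a) (x := x)
    exact ⟨⟨hm.1, hm.2⟩, shift_dvd_le hT hxT resrep_dvd (resrep_le (by omega))⟩
  · intro x hx y hy hxy
    simp only [Finset.coe_filter, Set.mem_setOf_eq, Finset.mem_Icc] at hx hy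
    dsimp only at hxy
    have dx := resrep_dvd (k := k) (a := a) (x := x)
    have dy := resrep_dvd (k := k) (a := a) (x := y)
    have hsub : (x - resrep k a x) - (y - resrep k a y) = x - y := by rw [hxy]; ring
    have hdd : ((k:ℤ)+1) ∣ (x - y) := by rw [← hsub]; exact dvd_sub dx dy
    exact eq_of_dvd_of_close (by positivity) hdd (by omega) (by omega)

lemma count_window_strict {T : Set ℤ} (hT : ShiftClosed k T) {b b' : ℤ} (hbb : b < b')
    (hb : b - ((k:ℤ)+1) ∈ T) (hub : ∀ t ∈ T, t < b) :
    ((Finset.Icc (b' - ((k:ℤ)+1)) (b' - 1)).filter (fun x => x ∈ T)).card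
      < ((Finset.Icc (b - ((k:ℤ)+1)) (b - 1)).filter (fun x => x ∈ T)).card := by
  have hwin : b - ((k:ℤ)+1) = (b - 1) - (k:ℤ) := by ring
  have hwin' : b' - ((k:ℤ)+1) = (b' - 1) - (k:ℤ) := by ring
  set s := (Finset.Icc (b - ((k:ℤ)+1)) (b - 1)).filter (fun x => x ∈ T) with hs
  set s' := (Finset.Icc (b' - ((k:ℤ)+1)) (b' - 1)).filter (fun x => x ∈ T) with hs'
  have hmem : b - ((k:ℤ)+1) ∈ s := by
    simp only [hs, Finset.mem_filter, Finset.mem_Icc]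
    exact ⟨⟨le_refl _, by omega⟩, hb⟩
  have hinj : Set.InjOn (fun x => resrep k (b-1) x) s' := by
    intro x hx y hy hxy
    simp only [hs', Finset.coe_filter, Set.mem_setOf_eq, Finset.mem_Icc] at hx hy
    dsimp only at hxy
    have hsub : (x - resrep k (b-1) x) - (y - resrep k (b-1) y) = x - y := by rw [hxy]; ring
    have hdd : ((k:ℤ)+1) ∣ (x - y) := by
      rw [← hsub]; exact dvd_sub resrep_dvd resrep_dvd
    exact eq_of_dvd_of_close (by positivity) hdd (by omega) (by omega)
  have hmaps : ∀ x ∈ s', resrep k (b-1) x ∈ s.erase (b - ((k:ℤ)+1)) := by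
    intro x hx
    simp only [hs', Finset.mem_filter, Finset.mem_Icc] at hx
    obtain ⟨⟨hx1, hx2⟩, hxT⟩ := hx
    have hm := resrep_mem (k := k) (a := b-1) (x := x)
    have hxlt : x < b := hub x hxT
    have hne : resrep k (b-1) x ≠ b - ((k:ℤ)+1) := by
      intro heq
      have hdd : ((k:ℤ)+1) ∣ (x - (b - ((k:ℤ)+1))) := by rw [← heq]; exact resrep_dvd
      have hdd' : ((k:ℤ)+1) ∣ (b - x) := by
        have he : b - x = ((k:ℤ)+1) - (x - (b - ((k:ℤ)+1))) := by ring
        rw [he]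
        exact dvd_sub ⟨1, by ring⟩ hdd
      have := Int.le_of_dvd (by omega) hdd'
      omega
    rw [Finset.mem_erase]
    refine ⟨hne, ?_⟩
    simp only [hs, Finset.mem_filter, Finset.mem_Icc]
    refine ⟨⟨by omega, hm.2⟩, shift_dvd_le hT hxT resrep_dvd (resrep_le (by omega))⟩
  calc s'.card = (s'.image (fun x => resrep k (b-1) x)).card :=
        (Finset.card_image_of_injOn hinj).symm
    _ ≤ (s.erase (b - ((k:ℤ)+1))).card := by
        apply Finset.card_le_card
        intro y hy
        obtain ⟨x, hx, rfl⟩ := Finset.mem_image.mp hy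
        exact hmaps x hx
    _ < s.card := Finset.card_erase_lt_of_mem hmem

noncomputable def cmax (k : ℕ) (T : Set ℤ) (r : ℤ) : ℤ :=
  if h : ∃ c : ℤ, (c ∈ T ∧ ((k:ℤ)+1) ∣ (c - r)) ∧ ∀ t, (t ∈ T ∧ ((k:ℤ)+1) ∣ (t - r)) → t ≤ c
  then h.choose else 0

lemma cmax_spec {T : Set ℤ} (hT : Adm k T) (r : ℤ) :
    (cmax k T r ∈ T ∧ ((k:ℤ)+1) ∣ (cmax k T r - r)) ∧
      ∀ t, t ∈ T → ((k:ℤ)+1) ∣ (t - r) → t ≤ cmax k T r := by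
  have hex : ∃ c : ℤ, (c ∈ T ∧ ((k:ℤ)+1) ∣ (c - r)) ∧
      ∀ t, (t ∈ T ∧ ((k:ℤ)+1) ∣ (t - r)) → t ≤ c := by
    obtain ⟨M, hM⟩ := hT.low
    obtain ⟨B, hB⟩ := hT.ub
    apply Int.exists_greatest_of_bdd
    · exact ⟨B, fun z hz => hB z hz.1⟩
    · refine ⟨r - ((k:ℤ)+1) * (max 0 (r - M)), ⟨hM _ ?_, ⟨-(max 0 (r - M)), by ring⟩⟩⟩
      have h1 : r - M ≤ max 0 (r - M) := le_max_right _ _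
      have h2 : (0:ℤ) ≤ max 0 (r - M) := le_max_left _ _
      nlinarith
  unfold cmax
  rw [dif_pos hex]
  obtain ⟨h1, h2⟩ := hex.choose_spec
  exact ⟨h1, fun t ht hd => h2 t ⟨ht, hd⟩⟩

lemma cmax_eq {T : Set ℤ} (hT : Adm k T) {r c : ℤ} (hc : c ∈ T) (hd : ((k:ℤ)+1) ∣ (c - r))
    (hg : ∀ t, t ∈ T → ((k:ℤ)+1) ∣ (t - r) → t ≤ c) : cmax k T r = c := by
  obtain ⟨⟨h1, h2⟩, h3⟩ := cmax_spec hT r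
  exact le_antisymm (hg _ h1 h2) (h3 c hc hd)

noncomputable def rnk (k : ℕ) (T : Set ℤ) (x : ℤ) : ℕ :=
  ((Finset.Icc (0:ℤ) (k:ℤ)).filter (fun r => cmax k T r < x)).card

lemma emod_mem_Icc (x : ℤ) : x % ((k:ℤ)+1) ∈ Finset.Icc (0:ℤ) (k:ℤ) := by
  rw [Finset.mem_Icc]
  have h1 : 0 ≤ x % ((k:ℤ) + 1) := Int.emod_nonneg _ (by positivity)
  have h2 : x % ((k:ℤ) + 1) < (k:ℤ) + 1 := Int.emod_lt_of_pos _ (by positivity)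
  omega

lemma dvd_sub_emod (x : ℤ) : ((k:ℤ)+1) ∣ (x - x % ((k:ℤ)+1)) := by
  have h := Int.mul_ediv_add_emod x ((k:ℤ)+1)
  exact ⟨x / ((k:ℤ)+1), by omega⟩

lemma emod_eq_of_dvd_sub {r x : ℤ} (hr : r ∈ Finset.Icc (0:ℤ) (k:ℤ))
    (hd : ((k:ℤ)+1) ∣ (x - r)) : x % ((k:ℤ)+1) = r := by
  rw [Finset.mem_Icc] at hr
  have h1 := dvd_sub_emod (k := k) x
  have h2 : ((k:ℤ)+1) ∣ (x % ((k:ℤ)+1) - r) := by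
    have he : x % ((k:ℤ)+1) - r = (x - r) - (x - x % ((k:ℤ)+1)) := by ring
    rw [he]
    exact dvd_sub hd h1
  have hm := emod_mem_Icc (k := k) x
  rw [Finset.mem_Icc] at hm
  exact eq_of_dvd_of_close (by positivity) h2 (by omega) (by omega)

lemma phi_eq_rnk {T : Set ℤ} (hT : Adm k T) {b : ℤ} (hb : b - ((k:ℤ)+1) ∈ T)
    (hub : ∀ t ∈ T, t < b) :
    ((Finset.Icc (b - (k:ℤ)) (b - 1)).filter (fun x => x ∉ T)).card
      = rnk k T (b - ((k:ℤ)+1)) := by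
  have hcardIcc : (Finset.Icc (b - (k:ℤ)) (b - 1)).card = k := by
    rw [Int.card_Icc]
    omega
  have hsplit : ((Finset.Icc (b - (k:ℤ)) (b - 1)).filter (fun x => x ∈ T)).card
      + ((Finset.Icc (b - (k:ℤ)) (b - 1)).filter (fun x => x ∉ T)).card = k := by
    rw [Finset.card_filter_add_card_filter_not]
    exact hcardIcc
  have hW' : ((Finset.Icc (b - ((k:ℤ)+1)) (b - 1)).filter (fun x => x ∈ T)).card
      = ((Finset.Icc (b - (k:ℤ)) (b - 1)).filter (fun x => x ∈ T)).card + 1 := by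
    have hins : Finset.Icc (b - ((k:ℤ)+1)) (b-1)
        = insert (b - ((k:ℤ)+1)) (Finset.Icc (b - (k:ℤ)) (b-1)) := by
      ext x
      simp only [Finset.mem_Icc, Finset.mem_insert]
      omega
    rw [hins, Finset.filter_insert, if_pos hb, Finset.card_insert_of_notMem]
    simp only [Finset.mem_filter, Finset.mem_Icc]
    push_neg
    intro h
    omega
  have hR : ((Finset.Icc (b - ((k:ℤ)+1)) (b - 1)).filter (fun x => x ∈ T)).card
      = ((Finset.Icc (0:ℤ) (k:ℤ)).filter (fun r => b - ((k:ℤ)+1) ≤ cmax k T r)).card := by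
    apply Finset.card_bij (fun x _ => x % ((k:ℤ)+1))
    · intro x hx
      simp only [Finset.mem_filter, Finset.mem_Icc] at hx
      obtain ⟨⟨hx1, hx2⟩, hxT⟩ := hx
      rw [Finset.mem_filter]
      refine ⟨emod_mem_Icc x, ?_⟩
      have hle : x ≤ cmax k T (x % ((k:ℤ)+1)) :=
        (cmax_spec hT _).2 x hxT (dvd_sub_emod x)
      omega
    · intro x hx y hy hxy
      simp only [Finset.mem_filter, Finset.mem_Icc] at hx hy
      have hxy' : x % ((k:ℤ)+1) = y % ((k:ℤ)+1) := hxy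
      have hdd : ((k:ℤ)+1) ∣ (x - y) := by
        have he : x - y = (x - x % ((k:ℤ)+1)) - (y - y % ((k:ℤ)+1)) := by
          rw [hxy']; ring
        rw [he]
        exact dvd_sub (dvd_sub_emod x) (dvd_sub_emod y)
      exact eq_of_dvd_of_close (by positivity) hdd (by omega) (by omega)
    · intro r hr
      simp only [Finset.mem_filter] at hr
      obtain ⟨hrIcc, hrc⟩ := hr
      set c := cmax k T r with hc
      have hspec := cmax_spec hT r
      set x := resrep k (b-1) c with hxdef
      have hm := resrep_mem (k := k) (a := b-1) (x := c)
      have hxc : ((k:ℤ)+1) ∣ (c - x) := resrep_dvd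
      have hxle : x ≤ c := by
        by_contra hgt
        push_neg at hgt
        have hdd' : ((k:ℤ)+1) ∣ (x - c) := by
          rw [show x - c = -(c - x) by ring]
          exact dvd_neg.mpr hxc
        have := Int.le_of_dvd (by omega) hdd'
        omega
      have hxT : x ∈ T := shift_dvd_le hT.sc hspec.1.1 hxc hxle
      refine ⟨x, ?_, ?_⟩
      · simp only [Finset.mem_filter, Finset.mem_Icc]
        refine ⟨⟨by omega, hm.2⟩, hxT⟩
      · apply emod_eq_of_dvd_sub hrIcc
        have he : x - r = (c - r) - (c - x) := by ring
        rw [he]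
        exact dvd_sub hspec.1.2 hxc
  have hsplit2 : ((Finset.Icc (0:ℤ) (k:ℤ)).filter (fun r => cmax k T r < b - ((k:ℤ)+1))).card
      + ((Finset.Icc (0:ℤ) (k:ℤ)).filter (fun r => b - ((k:ℤ)+1) ≤ cmax k T r)).card
      = k + 1 := by
    have hcard : (Finset.Icc (0:ℤ) (k:ℤ)).card = k + 1 := by
      rw [Int.card_Icc]
      omega
    have hsp := Finset.card_filter_add_card_filter_not
      (s := Finset.Icc (0:ℤ) (k:ℤ)) (p := fun r => cmax k T r < b - ((k:ℤ)+1))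
    rw [hcard] at hsp
    rw [← hsp]
    congr 2
    apply Finset.filter_congr
    intro r _
    simp [not_lt]
  unfold rnk
  omega

lemma cmax_injOn {T : Set ℤ} (hT : Adm k T) {r r' : ℤ} (hr : r ∈ Finset.Icc (0:ℤ) (k:ℤ))
    (hr' : r' ∈ Finset.Icc (0:ℤ) (k:ℤ)) (h : cmax k T r = cmax k T r') : r = r' := by
  rw [Finset.mem_Icc] at hr hr'
  have d1 := (cmax_spec hT r).1.2
  have d2 := (cmax_spec hT r').1.2
  rw [h] at d1
  have hdd : ((k:ℤ)+1) ∣ (r' - r) := by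
    rw [show r' - r = (cmax k T r' - r) - (cmax k T r' - r') by ring]
    exact dvd_sub d1 d2
  exact (eq_of_dvd_of_close (by positivity) hdd (by omega) (by omega)).symm

lemma rnk_cmax_lt {T : Set ℤ} (hT : Adm k T) {r r' : ℤ} (hr : r ∈ Finset.Icc (0:ℤ) (k:ℤ))
    (hr' : r' ∈ Finset.Icc (0:ℤ) (k:ℤ)) (h : cmax k T r < cmax k T r') :
    rnk k T (cmax k T r) < rnk k T (cmax k T r') := by
  unfold rnk
  apply Finset.card_lt_card
  rw [Finset.ssubset_iff_of_subset]
  · refine ⟨r, ?_, ?_⟩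
    · rw [Finset.mem_filter]; exact ⟨hr, h⟩
    · rw [Finset.mem_filter]; push_neg; intro _; exact le_refl _
  · intro x hx
    rw [Finset.mem_filter] at hx ⊢
    exact ⟨hx.1, lt_trans hx.2 h⟩

lemma rnk_cmax_le {T : Set ℤ} (hT : Adm k T) {r : ℤ} (hr : r ∈ Finset.Icc (0:ℤ) (k:ℤ)) :
    rnk k T (cmax k T r) ≤ k := by
  unfold rnk
  have hsub : (Finset.Icc (0:ℤ) (k:ℤ)).filter (fun r' => cmax k T r' < cmax k T r)
      ⊆ (Finset.Icc (0:ℤ) (k:ℤ)).erase r := by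
    intro x hx
    rw [Finset.mem_filter] at hx
    rw [Finset.mem_erase]
    refine ⟨?_, hx.1⟩
    intro hxr
    rw [hxr] at hx
    omega
  have := Finset.card_le_card hsub
  have hcard : (Finset.Icc (0:ℤ) (k:ℤ)).card = k + 1 := by rw [Int.card_Icc]; omega
  have herase := Finset.card_erase_of_mem hr
  omega

lemma exists_rnk {T : Set ℤ} (hT : Adm k T) {v : ℕ} (hv : v ≤ k) :
    ∃ r ∈ Finset.Icc (0:ℤ) (k:ℤ), rnk k T (cmax k T r) = v := by
  have hinj : Set.InjOn (fun r => rnk k T (cmax k T r)) (Finset.Icc (0:ℤ) (k:ℤ)) := by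
    intro r hr r' hr' h
    rw [Finset.mem_coe] at hr hr'
    dsimp only at h
    rcases lt_trichotomy (cmax k T r) (cmax k T r') with hc | hc | hc
    · exact absurd h (Nat.ne_of_lt (rnk_cmax_lt hT hr hr' hc))
    · exact cmax_injOn hT hr hr' hc
    · exact absurd h.symm (Nat.ne_of_lt (rnk_cmax_lt hT hr' hr hc))
  have hcardI : (Finset.Icc (0:ℤ) (k:ℤ)).card = k + 1 := by rw [Int.card_Icc]; omega
  set img := (Finset.Icc (0:ℤ) (k:ℤ)).image (fun r => rnk k T (cmax k T r)) with himg
  have hcard : img.card = k + 1 := by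
    rw [himg, Finset.card_image_of_injOn hinj, hcardI]
  have hsub : img ⊆ Finset.range (k + 1) := by
    intro x hx
    rw [himg, Finset.mem_image] at hx
    obtain ⟨r, hr, rfl⟩ := hx
    rw [Finset.mem_range]
    exact Nat.lt_succ_of_le (rnk_cmax_le hT hr)
  have heq : img = Finset.range (k + 1) :=
    Finset.eq_of_subset_of_card_le hsub (by rw [hcard, Finset.card_range])
  have hv' : v ∈ img := by rw [heq, Finset.mem_range]; omega
  rw [himg, Finset.mem_image] at hv'
  obtain ⟨r, hr, hrv⟩ := hv'
  exact ⟨r, hr, hrv⟩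

lemma Adm.insert_new {T : Set ℤ} (hT : Adm k T) {g : ℤ} (hg : g - ((k:ℤ)+1) ∈ T) :
    Adm k (insert g T) := by
  constructor
  · intro t ht
    rcases Set.mem_insert_iff.mp ht with rfl | htT
    · exact Set.mem_insert_of_mem _ hg
    · exact Set.mem_insert_of_mem _ (hT.sc t htT)
  · obtain ⟨M, hM⟩ := hT.low
    exact ⟨M, fun x hx => Set.mem_insert_of_mem _ (hM x hx)⟩
  · obtain ⟨M, hM⟩ := hT.ub
    refine ⟨max M g, fun t ht => ?_⟩
    rcases Set.mem_insert_iff.mp ht with rfl | htT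
    · exact le_max_right _ _
    · exact le_trans (hM t htT) (le_max_left _ _)

lemma cmax_insert {T : Set ℤ} (hT : Adm k T) {g : ℤ} (hgub : ∀ t ∈ T, t < g)
    (hg : g - ((k:ℤ)+1) ∈ T) (r : ℤ) :
    cmax k (insert g T) r = if ((k:ℤ)+1) ∣ (g - r) then g else cmax k T r := by
  have hAdm := hT.insert_new hg
  split_ifs with hd
  · apply cmax_eq hAdm (Set.mem_insert _ _) hd
    intro t ht _
    rcases Set.mem_insert_iff.mp ht with rfl | htT
    · exact le_refl _
    · exact (hgub t htT).le
  · apply cmax_eq hAdm (Set.mem_insert_of_mem _ (cmax_spec hT r).1.1) (cmax_spec hT r).1.2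
    intro t ht hdt
    rcases Set.mem_insert_iff.mp ht with rfl | htT
    · exact absurd hdt hd
    · exact (cmax_spec hT r).2 t htT hdt

lemma rnk_insert {T : Set ℤ} (hT : Adm k T) {g : ℤ} (hgub : ∀ t ∈ T, t < g)
    (hg : g - ((k:ℤ)+1) ∈ T) :
    rnk k (insert g T) (g - ((k:ℤ)+1)) = rnk k T (g - ((k:ℤ)+1)) := by
  unfold rnk
  congr 1
  apply Finset.filter_congr
  intro r hr
  rw [cmax_insert hT hgub hg r]
  split_ifs with hd
  · have hd' : ((k:ℤ)+1) ∣ (g - ((k:ℤ)+1) - r) := by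
      rw [show g - ((k:ℤ)+1) - r = (g - r) - ((k:ℤ)+1) by ring]
      exact dvd_sub hd ⟨1, by ring⟩
    have hle : g - ((k:ℤ)+1) ≤ cmax k T r := (cmax_spec hT r).2 _ hg hd'
    constructor
    · intro h; omega
    · intro h; omega
  · exact Iff.rfl

/-! ### The forward map -/

lemma windowS_succ {T : Set ℤ} {b : ℤ} (hb : b - ((k:ℤ)+1) ∈ T) :
    ((Finset.Icc (b - ((k:ℤ)+1)) (b - 1)).filter (fun x => x ∈ T)).card
      = ((Finset.Icc (b - (k:ℤ)) (b - 1)).filter (fun x => x ∈ T)).card + 1 := by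
  have hins : Finset.Icc (b - ((k:ℤ)+1)) (b-1)
      = insert (b - ((k:ℤ)+1)) (Finset.Icc (b - (k:ℤ)) (b-1)) := by
    ext x
    simp only [Finset.mem_Icc, Finset.mem_insert]
    omega
  rw [hins, Finset.filter_insert, if_pos hb, Finset.card_insert_of_notMem]
  simp only [Finset.mem_filter, Finset.mem_Icc]
  push_neg
  intro h
  omega

lemma rowcount_eq_sub (k : ℕ) (μ : YoungDiagram) (i : ℕ) :
    rowcount k μ i
      = k - ((Finset.Icc (bs μ i - (k:ℤ)) (bs μ i - 1)).filter (fun x => x ∈ Sset μ)).card := by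
  have hcardIcc : (Finset.Icc (bs μ i - (k:ℤ)) (bs μ i - 1)).card = k := by
    rw [Int.card_Icc]; omega
  have hsplit : ((Finset.Icc (bs μ i - (k:ℤ)) (bs μ i - 1)).filter (fun x => x ∈ Sset μ)).card
      + ((Finset.Icc (bs μ i - (k:ℤ)) (bs μ i - 1)).filter (fun x => x ∉ Sset μ)).card = k := by
    rw [Finset.card_filter_add_card_filter_not]
    exact hcardIcc
  rw [rowcount_eq_window]
  omega

lemma rowcount_le (k : ℕ) (μ : YoungDiagram) (i : ℕ) : rowcount k μ i ≤ k := by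
  rw [rowcount_eq_sub]
  omega

lemma rowcount_anti {μ : YoungDiagram} (hc : μ.IsCore (k+1)) {i i' : ℕ} (h : i ≤ i') :
    rowcount k μ i' ≤ rowcount k μ i := by
  have hsc : ShiftClosed k (Sset μ) := by
    intro t ht
    obtain ⟨l, rfl⟩ := ht
    exact (isCore_iff k μ).mp hc l
  have hb : bs μ i - ((k:ℤ)+1) ∈ Sset μ := (isCore_iff k μ).mp hc i
  have hb' : bs μ i' - ((k:ℤ)+1) ∈ Sset μ := (isCore_iff k μ).mp hc i'
  have hanti : bs μ i' ≤ bs μ i := by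
    rcases Nat.eq_or_lt_of_le h with rfl | hlt
    · exact le_refl _
    · exact (bs_strictAnti μ hlt).le
  have hwin := count_window_anti hsc (a := bs μ i' - 1) (a' := bs μ i - 1) (by omega)
  have h1 := windowS_succ (k := k) hb
  have h2 := windowS_succ (k := k) hb'
  rw [rowcount_eq_sub, rowcount_eq_sub]
  have hrw : ∀ b : ℤ, b - 1 - (k:ℤ) = b - ((k:ℤ)+1) := by intro b; ring
  rw [hrw, hrw] at hwin
  omega

lemma rowLen_zero_of_not_mem {μ : YoungDiagram} {i : ℕ} (h : (i, 0) ∉ μ) : μ.rowLen i = 0 := by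
  by_contra hpos
  exact h (YoungDiagram.mem_iff_lt_rowLen.mpr (by omega))

lemma rowcount_zero_of_rowLen_zero {k : ℕ} {μ : YoungDiagram} {i : ℕ}
    (h : μ.rowLen i = 0) : rowcount k μ i = 0 := by
  unfold rowcount
  rw [Finset.card_eq_zero, Finset.filter_eq_empty_iff]
  rintro ⟨a, b⟩ hc
  rw [YoungDiagram.mem_cells, YoungDiagram.mem_iff_lt_rowLen] at hc
  rintro ⟨rfl, -⟩
  rw [h] at hc
  omega

lemma sorted_map_range {f : ℕ → ℕ} (hf : ∀ a b, a ≤ b → f b ≤ f a) (n : ℕ) :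
    ((List.range n).map f).SortedGE := by
  rw [List.sortedGE_iff_pairwise, List.pairwise_map]
  apply List.Pairwise.imp_of_mem (R := (· < ·))
  · intro a b _ _ hab
    exact hf a b hab.le
  · exact List.pairwise_lt_range (n := n)

/-- The forward map: the `k`-bounded partition associated to a `(k+1)`-core. -/
noncomputable def fwd (k : ℕ) (μ : YoungDiagram) (hc : μ.IsCore (k+1)) : YoungDiagram :=
  YoungDiagram.ofRowLens ((List.range (μ.colLen 0)).map (rowcount k μ))
    (sorted_map_range (fun a b hab => rowcount_anti hc hab) _)

lemma fwd_rowLen (k : ℕ) (μ : YoungDiagram) (hc : μ.IsCore (k+1)) (i : ℕ) :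
    (fwd k μ hc).rowLen i = rowcount k μ i := by
  rcases Nat.lt_or_ge i (μ.colLen 0) with hi | hi
  · have hlen : i < ((List.range (μ.colLen 0)).map (rowcount k μ)).length := by
      simpa using hi
    have := YoungDiagram.rowLen_ofRowLens
      (w := (List.range (μ.colLen 0)).map (rowcount k μ))
      (hw := sorted_map_range (fun a b hab => rowcount_anti hc hab) _) ⟨i, hlen⟩
    rw [fwd, this]
    simp
  · have h0 : (fwd k μ hc).rowLen i = 0 := by
      apply rowLen_zero_of_not_mem
      rw [fwd]
      intro hmem
      rw [YoungDiagram.mem_ofRowLens] at hmem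
      obtain ⟨hlt, -⟩ := hmem
      simp only [List.length_map, List.length_range] at hlt
      omega
    rw [h0]
    exact (rowcount_zero_of_rowLen_zero (rowLen_eq_zero_of μ hi)).symm

lemma card_filter_rows (μ : YoungDiagram) (P : ℕ × ℕ → Prop) [DecidablePred P] {N : ℕ}
    (hN : μ.colLen 0 ≤ N) :
    (μ.cells.filter P).card
      = ∑ i ∈ Finset.range N, ((μ.cells.filter fun c => c.1 = i ∧ P c)).card := by
  rw [Finset.card_eq_sum_card_fiberwise (f := Prod.fst) (t := Finset.range N)]
  · apply Finset.sum_congr rfl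
    intro i _
    congr 1
    rw [Finset.filter_filter]
    apply Finset.filter_congr
    intro c _
    tauto
  · intro c hc
    rw [Finset.mem_coe, Finset.mem_filter] at hc
    have h1 : (c.1, c.2) ∈ μ := by
      rw [← YoungDiagram.mem_cells]
      simpa using hc.1
    have h2 := YoungDiagram.mem_iff_lt_colLen.mp h1
    have h3 := μ.colLen_anti 0 c.2 (Nat.zero_le _)
    rw [Finset.mem_coe, Finset.mem_range]
    omega

lemma card_eq_sum_rowLen (μ : YoungDiagram) {N : ℕ} (hN : μ.colLen 0 ≤ N) :
    μ.card = ∑ i ∈ Finset.range N, μ.rowLen i := by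
  have h := card_filter_rows μ (fun _ => True) hN
  rw [Finset.filter_true] at h
  rw [YoungDiagram.card, h]
  apply Finset.sum_congr rfl
  intro i _
  rw [μ.rowLen_eq_card, YoungDiagram.row]
  congr 1
  apply Finset.filter_congr
  intro c _
  tauto

lemma coreLength_eq_sum (k : ℕ) (μ : YoungDiagram) {N : ℕ} (hN : μ.colLen 0 ≤ N) :
    μ.coreLength k = ∑ i ∈ Finset.range N, rowcount k μ i :=
  card_filter_rows μ (fun c => μ.hook c ≤ k) hN

lemma ext_rowLen {μ ν : YoungDiagram} (h : ∀ i, μ.rowLen i = ν.rowLen i) : μ = ν := by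
  apply YoungDiagram.ext
  ext ⟨i, j⟩
  rw [YoungDiagram.mem_cells, YoungDiagram.mem_cells, YoungDiagram.mem_iff_lt_rowLen,
    YoungDiagram.mem_iff_lt_rowLen, h i]

/-! ### Injectivity -/

lemma mem_tail {μ : YoungDiagram} {i : ℕ} {x : ℤ} (hx : x ∈ Sset μ) (hlt : x < bs μ i) :
    ∃ l, i < l ∧ bs μ l = x := by
  obtain ⟨l, rfl⟩ := hx
  refine ⟨l, ?_, rfl⟩
  by_contra hle
  push_neg at hle
  rcases Nat.eq_or_lt_of_le hle with rfl | hlt'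
  · omega
  · have := bs_strictAnti μ hlt'
    omega

lemma tail_facts {μ : YoungDiagram} (hc : μ.IsCore (k+1)) (i : ℕ)
    {T : Set ℤ} (hT : T = {x | ∃ l, i < l ∧ bs μ l = x}) :
    ShiftClosed k T ∧ (bs μ i - ((k:ℤ)+1) ∈ T) ∧ (∀ t ∈ T, t < bs μ i) ∧
      rowcount k μ i + ((Finset.Icc (bs μ i - ((k:ℤ)+1)) (bs μ i - 1)).filter
        (fun x => x ∈ T)).card = k + 1 := by
  classical
  subst hT
  have hcore := (isCore_iff k μ).mp hc
  have hub : ∀ t ∈ {x | ∃ l, i < l ∧ bs μ l = x}, t < bs μ i := by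
    rintro t ⟨l, hl, rfl⟩
    exact bs_strictAnti μ hl
  have hsc : ShiftClosed k {x | ∃ l, i < l ∧ bs μ l = x} := by
    rintro t ⟨l, hl, rfl⟩
    have h1 : bs μ l - ((k:ℤ)+1) ∈ Sset μ := hcore l
    apply mem_tail h1
    have := bs_strictAnti μ hl
    omega
  have hb : bs μ i - ((k:ℤ)+1) ∈ {x | ∃ l, i < l ∧ bs μ l = x} := by
    apply mem_tail (hcore i)
    omega
  refine ⟨hsc, hb, hub, ?_⟩
  have hfc : (Finset.Icc (bs μ i - (k:ℤ)) (bs μ i - 1)).filter (fun x => x ∉ Sset μ)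
      = (Finset.Icc (bs μ i - (k:ℤ)) (bs μ i - 1)).filter
          (fun x => x ∉ {x | ∃ l, i < l ∧ bs μ l = x}) := by
    apply Finset.filter_congr
    intro x hx
    rw [Finset.mem_Icc] at hx
    constructor
    · intro hxS hxT
      obtain ⟨l, hl, hbl⟩ := hxT
      exact hxS ⟨l, hbl⟩
    · intro hxT hxS
      exact hxT (mem_tail hxS (by omega))
  have h1 := windowS_succ (k := k) (T := {x | ∃ l, i < l ∧ bs μ l = x}) hb
  have hcardIcc : (Finset.Icc (bs μ i - (k:ℤ)) (bs μ i - 1)).card = k := by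
    rw [Int.card_Icc]; omega
  have hsplit : ((Finset.Icc (bs μ i - (k:ℤ)) (bs μ i - 1)).filter
        (fun x => x ∈ {x | ∃ l, i < l ∧ bs μ l = x})).card
      + ((Finset.Icc (bs μ i - (k:ℤ)) (bs μ i - 1)).filter
        (fun x => x ∉ {x | ∃ l, i < l ∧ bs μ l = x})).card = k := by
    rw [Finset.card_filter_add_card_filter_not]
    exact hcardIcc
  rw [rowcount_eq_window, hfc]
  omega

lemma row_determined {μ ν : YoungDiagram} (hc : μ.IsCore (k+1)) (hc' : ν.IsCore (k+1)) (i : ℕ)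
    (htail : ∀ l, i < l → bs μ l = bs ν l)
    (hcount : rowcount k μ i = rowcount k ν i) : bs μ i = bs ν i := by
  classical
  have hTeq : {x : ℤ | ∃ l, i < l ∧ bs ν l = x} = {x | ∃ l, i < l ∧ bs μ l = x} := by
    ext x
    constructor
    · rintro ⟨l, hl, rfl⟩
      exact ⟨l, hl, htail l hl⟩
    · rintro ⟨l, hl, rfl⟩
      exact ⟨l, hl, (htail l hl).symm⟩
  obtain ⟨hsc, hbμ, hubμ, hcntμ⟩ :=
    tail_facts hc i (T := {x | ∃ l, i < l ∧ bs μ l = x}) rfl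
  obtain ⟨-, hbν, hubν, hcntν⟩ :=
    tail_facts hc' i (T := {x | ∃ l, i < l ∧ bs μ l = x}) hTeq.symm
  rcases lt_trichotomy (bs μ i) (bs ν i) with hlt | heq | hlt
  · exfalso
    have := count_window_strict hsc hlt hbμ hubμ
    omega
  · exact heq
  · exfalso
    have := count_window_strict hsc hlt hbν hubν
    omega

lemma core_inj {μ ν : YoungDiagram} (hc : μ.IsCore (k+1)) (hc' : ν.IsCore (k+1))
    (hcount : ∀ i, rowcount k μ i = rowcount k ν i) : μ = ν := by
  set N := max (μ.colLen 0) (ν.colLen 0) with hN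
  have key : ∀ d i, N ≤ i + d → bs μ i = bs ν i := by
    intro d
    induction d with
    | zero =>
        intro i hi
        simp only [Nat.add_zero] at hi
        rw [bs_eq_neg μ (le_trans (le_max_left _ _) hi),
          bs_eq_neg ν (le_trans (le_max_right _ _) hi)]
    | succ d ih =>
        intro i hi
        rcases le_or_gt N (i + d) with h | h
        · exact ih i h
        · apply row_determined hc hc' i
          · intro l hl
            exact ih l (by omega)
          · exact hcount i
  apply ext_rowLen
  intro i
  have hb := key N i (by omega)
  unfold bs at hb
  omega


/-! ### Surjectivity: constructing a core from a `k`-bounded partition -/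

noncomputable def pick (k : ℕ) (T : Set ℤ) (v : ℕ) : ℤ :=
  if h : ∃ r ∈ Finset.Icc (0:ℤ) (k:ℤ), rnk k T (cmax k T r) = v
  then cmax k T h.choose + ((k:ℤ)+1) else 0

lemma pick_spec {T : Set ℤ} (hT : Adm k T) {v : ℕ} (hv : v ≤ k) :
    ∃ r ∈ Finset.Icc (0:ℤ) (k:ℤ), pick k T v = cmax k T r + ((k:ℤ)+1)
      ∧ rnk k T (cmax k T r) = v := by
  have hex := exists_rnk hT hv
  unfold pick
  rw [dif_pos hex]
  obtain ⟨hr1, hr2⟩ := hex.choose_spec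
  exact ⟨hex.choose, hr1, rfl, hr2⟩

noncomputable def stage (k : ℕ) (lam : YoungDiagram) : ℕ → Set ℤ × ℤ
  | 0 => (Set.Iic (-(lam.colLen 0 : ℤ)), -(lam.colLen 0 : ℤ))
  | d + 1 =>
      (insert (pick k (stage k lam d).1 (lam.rowLen (lam.colLen 0 - (d+1))))
          (stage k lam d).1,
       pick k (stage k lam d).1 (lam.rowLen (lam.colLen 0 - (d+1))))

lemma stage_fst_succ (k : ℕ) (lam : YoungDiagram) (d : ℕ) :
    (stage k lam (d+1)).1 = insert ((stage k lam (d+1)).2) (stage k lam d).1 := rfl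

lemma Adm_Iic (c : ℤ) : Adm k (Set.Iic c) := by
  refine ⟨?_, ⟨c, fun x hx => hx⟩, ⟨c, fun t ht => ht⟩⟩
  intro t ht
  simp only [Set.mem_Iic] at ht ⊢
  omega

lemma cmax_Iic_ge (c r : ℤ) : c - (k:ℤ) ≤ cmax k (Set.Iic c) r := by
  have hm := resrep_mem (k := k) (a := c) (x := r)
  have hd : ((k:ℤ)+1) ∣ (resrep k c r - r) := by
    rw [show resrep k c r - r = -(r - resrep k c r) by ring]
    exact dvd_neg.mpr resrep_dvd
  have := (cmax_spec (Adm_Iic c) r).2 (resrep k c r) hm.2 hd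
  omega

structure StInv (k : ℕ) (lam : YoungDiagram) (d : ℕ) : Prop where
  adm : Adm k (stage k lam d).1
  mem : (stage k lam d).2 ∈ (stage k lam d).1
  max : ∀ t ∈ (stage k lam d).1, t ≤ (stage k lam d).2
  shift : (stage k lam d).2 - ((k:ℤ)+1) ∈ (stage k lam d).1
  rnkeq : rnk k (stage k lam d).1 ((stage k lam d).2 - ((k:ℤ)+1))
            = lam.rowLen (lam.colLen 0 - d)

variable {lam : YoungDiagram}

lemma stInv_zero (lam : YoungDiagram) : StInv k lam 0 := by
  have hL : lam.rowLen (lam.colLen 0 - 0) = 0 := by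
    rw [Nat.sub_zero]
    exact rowLen_eq_zero_of lam (le_refl _)
  refine ⟨Adm_Iic _, ?_, fun t ht => ht, ?_, ?_⟩
  · show -(lam.colLen 0:ℤ) ∈ Set.Iic (-(lam.colLen 0:ℤ))
    exact Set.self_mem_Iic
  · show -(lam.colLen 0:ℤ) - ((k:ℤ)+1) ∈ Set.Iic (-(lam.colLen 0:ℤ))
    simp only [Set.mem_Iic]
    omega
  show rnk k (Set.Iic (-(lam.colLen 0:ℤ))) (-(lam.colLen 0:ℤ) - ((k:ℤ)+1))
      = lam.rowLen (lam.colLen 0 - 0)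
  rw [hL]
  unfold rnk
  rw [Finset.card_eq_zero, Finset.filter_eq_empty_iff]
  intro r _
  have := cmax_Iic_ge (k := k) (-(lam.colLen 0 : ℤ)) r
  simp only [not_lt]
  omega

lemma stage_step (hbound : ∀ i, lam.rowLen i ≤ k) {d : ℕ} (hInv : StInv k lam d) :
    ((stage k lam (d+1)).2 - ((k:ℤ)+1) ∈ (stage k lam d).1)
    ∧ (∀ t ∈ (stage k lam d).1, t < (stage k lam (d+1)).2)
    ∧ rnk k (stage k lam d).1 ((stage k lam (d+1)).2 - ((k:ℤ)+1))
        = lam.rowLen (lam.colLen 0 - (d+1)) := by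
  obtain ⟨r, hrIcc, hpeq, hrv⟩ := pick_spec hInv.adm (hbound (lam.colLen 0 - (d+1)))
  have hgd1 : (stage k lam (d+1)).2
      = pick k (stage k lam d).1 (lam.rowLen (lam.colLen 0 - (d+1))) := rfl
  have hgc : (stage k lam (d+1)).2 = cmax k (stage k lam d).1 r + ((k:ℤ)+1) := by
    rw [hgd1, hpeq]
  set c := cmax k (stage k lam d).1 r with hc
  have hcT : c ∈ (stage k lam d).1 := (cmax_spec hInv.adm r).1.1
  have hshift : (stage k lam (d+1)).2 - ((k:ℤ)+1) ∈ (stage k lam d).1 := by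
    rw [hgc, show c + ((k:ℤ)+1) - ((k:ℤ)+1) = c by ring]
    exact hcT
  have hne : c ≠ (stage k lam d).2 - ((k:ℤ)+1) := by
    intro heq
    have hdvd : ((k:ℤ)+1) ∣ ((stage k lam d).2 - r) := by
      have h1 := (cmax_spec hInv.adm r).1.2
      rw [show (stage k lam d).2 - r = (c - r) + ((k:ℤ)+1) by omega]
      exact dvd_add h1 ⟨1, by ring⟩
    have := (cmax_spec hInv.adm r).2 _ hInv.mem hdvd
    omega
  have hnlt : ¬ c < (stage k lam d).2 - ((k:ℤ)+1) := by
    intro hlt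
    have hnotmem : r ∉ (Finset.Icc (0:ℤ) (k:ℤ)).filter
        (fun r' => cmax k (stage k lam d).1 r' < c) := by
      rw [Finset.mem_filter]
      push_neg
      intro _
      exact le_of_eq hc
    have hsub : insert r ((Finset.Icc (0:ℤ) (k:ℤ)).filter
          (fun r' => cmax k (stage k lam d).1 r' < c))
        ⊆ (Finset.Icc (0:ℤ) (k:ℤ)).filter
          (fun r' => cmax k (stage k lam d).1 r' < (stage k lam d).2 - ((k:ℤ)+1)) := by
      intro x hx
      rcases Finset.mem_insert.mp hx with rfl | hx
      · rw [Finset.mem_filter]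
        exact ⟨hrIcc, by rw [← hc]; exact hlt⟩
      · rw [Finset.mem_filter] at hx ⊢
        exact ⟨hx.1, by have := hx.2; omega⟩
    have hcard := Finset.card_le_card hsub
    rw [Finset.card_insert_of_notMem hnotmem] at hcard
    have hrk0 := hInv.rnkeq
    have hmono := lam.rowLen_anti (lam.colLen 0 - (d+1)) (lam.colLen 0 - d) (by omega)
    unfold rnk at hrk0 hrv
    omega
  have hgt : (stage k lam d).2 < (stage k lam (d+1)).2 := by
    rw [hgc]
    have : (stage k lam d).2 - ((k:ℤ)+1) < c := lt_of_le_of_ne (not_lt.mp hnlt) (Ne.symm hne)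
    omega
  refine ⟨hshift, fun t ht => lt_of_le_of_lt (hInv.max t ht) hgt, ?_⟩
  rw [hgc, show c + ((k:ℤ)+1) - ((k:ℤ)+1) = c by ring]
  exact hrv

lemma stInv_all (hbound : ∀ i, lam.rowLen i ≤ k) : ∀ d, StInv k lam d := by
  intro d
  induction d with
  | zero => exact stInv_zero lam
  | succ d ih =>
      obtain ⟨hsh, hub, hrk⟩ := stage_step hbound ih
      have hAdm' : Adm k (stage k lam (d+1)).1 := by
        rw [stage_fst_succ]
        exact ih.adm.insert_new hsh
      refine ⟨hAdm', ?_, ?_, ?_, ?_⟩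
      · rw [stage_fst_succ]
        exact Set.mem_insert _ _
      · intro t ht
        rw [stage_fst_succ] at ht
        rcases Set.mem_insert_iff.mp ht with rfl | htT
        · exact le_refl _
        · exact (hub t htT).le
      · rw [stage_fst_succ]
        exact Set.mem_insert_of_mem _ hsh
      · rw [stage_fst_succ, rnk_insert ih.adm hub hsh]
        exact hrk

lemma gst_strictMono (hbound : ∀ i, lam.rowLen i ≤ k) :
    StrictMono (fun d => (stage k lam d).2) := by
  apply strictMono_nat_of_lt_succ
  intro d
  obtain ⟨-, hub, -⟩ := stage_step hbound (stInv_all hbound d)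
  exact hub _ (stInv_all hbound d).mem

lemma Tst_mem_iff (k : ℕ) (lam : YoungDiagram) (d : ℕ) (x : ℤ) :
    x ∈ (stage k lam d).1
      ↔ (x ≤ -(lam.colLen 0 : ℤ) ∨ ∃ d', 1 ≤ d' ∧ d' ≤ d ∧ x = (stage k lam d').2) := by
  induction d with
  | zero =>
      simp only [stage, Set.mem_Iic]
      constructor
      · intro h; exact Or.inl h
      · rintro (h | ⟨d', h1, h2, -⟩)
        · exact h
        · omega
  | succ d ih =>
      rw [stage_fst_succ, Set.mem_insert_iff, ih]
      constructor
      · rintro (rfl | h | ⟨d', h1, h2, h3⟩)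
        · exact Or.inr ⟨d+1, by omega, le_refl _, rfl⟩
        · exact Or.inl h
        · exact Or.inr ⟨d', h1, by omega, h3⟩
      · rintro (h | ⟨d', h1, h2, h3⟩)
        · exact Or.inr (Or.inl h)
        · rcases Nat.eq_or_lt_of_le h2 with rfl | hlt
          · exact Or.inl h3
          · exact Or.inr (Or.inr ⟨d', h1, by omega, h3⟩)

noncomputable def bseq (k : ℕ) (lam : YoungDiagram) (i : ℕ) : ℤ :=
  if i ≤ lam.colLen 0 then (stage k lam (lam.colLen 0 - i)).2 else -(i:ℤ)

lemma bseq_of_ge {i : ℕ} (h : lam.colLen 0 ≤ i) : bseq k lam i = -(i:ℤ) := by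
  unfold bseq
  rcases Nat.eq_or_lt_of_le h with rfl | hlt
  · rw [if_pos (le_refl _), Nat.sub_self]
    rfl
  · rw [if_neg (by omega)]

lemma bseq_of_le {i : ℕ} (h : i ≤ lam.colLen 0) :
    bseq k lam i = (stage k lam (lam.colLen 0 - i)).2 := by
  unfold bseq
  rw [if_pos h]

lemma bseq_succ_lt (hbound : ∀ i, lam.rowLen i ≤ k) (i : ℕ) :
    bseq k lam (i+1) < bseq k lam i := by
  rcases Nat.lt_or_ge i (lam.colLen 0) with hi | hi
  · rw [bseq_of_le (by omega), bseq_of_le (by omega)]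
    have h1 : lam.colLen 0 - i = (lam.colLen 0 - (i+1)) + 1 := by omega
    rw [h1]
    exact gst_strictMono hbound (Nat.lt_succ_self _)
  · rw [bseq_of_ge hi, bseq_of_ge (by omega)]
    omega

lemma bseq_strictAnti (hbound : ∀ i, lam.rowLen i ≤ k) : StrictAnti (bseq k lam) :=
  strictAnti_nat_of_succ_lt (bseq_succ_lt hbound)

lemma bseq_add_nonneg (hbound : ∀ i, lam.rowLen i ≤ k) (i : ℕ) :
    0 ≤ bseq k lam i + i := by
  rcases Nat.lt_or_ge i (lam.colLen 0) with hi | hi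
  · have main : ∀ j, j ≤ lam.colLen 0 → 0 ≤ bseq k lam (lam.colLen 0 - j) + (lam.colLen 0 - j : ℕ) := by
      intro j
      induction j with
      | zero =>
          intro _
          rw [Nat.sub_zero, bseq_of_ge (le_refl _)]
          omega
      | succ j ih =>
          intro hj
          have hih := ih (by omega)
          have hstep := bseq_succ_lt hbound (lam.colLen 0 - (j+1))
          have h1 : lam.colLen 0 - (j+1) + 1 = lam.colLen 0 - j := by omega
          rw [h1] at hstep
          have h2 : ((lam.colLen 0 - (j+1) : ℕ) : ℤ) = (lam.colLen 0 - j : ℕ) - 1 := by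
            omega
          omega
    have := main (lam.colLen 0 - i) (by omega)
    have h3 : lam.colLen 0 - (lam.colLen 0 - i) = i := by omega
    rw [h3] at this
    exact this
  · rw [bseq_of_ge hi]
    omega

noncomputable def kap (k : ℕ) (lam : YoungDiagram) (i : ℕ) : ℕ :=
  (bseq k lam i + i).toNat

lemma kap_cast (hbound : ∀ i, lam.rowLen i ≤ k) (i : ℕ) :
    ((kap k lam i : ℤ)) = bseq k lam i + i := by
  unfold kap
  exact Int.toNat_of_nonneg (bseq_add_nonneg hbound i)

lemma bseq_le_sub (hbound : ∀ i, lam.rowLen i ≤ k) (a n : ℕ) :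
    bseq k lam (a + n) + n ≤ bseq k lam a := by
  induction n with
  | zero => simp
  | succ n ih =>
      have hstep := bseq_succ_lt hbound (a + n)
      have he : a + (n + 1) = (a + n) + 1 := by omega
      rw [he]
      push_cast
      push_cast at ih
      omega

lemma kap_anti (hbound : ∀ i, lam.rowLen i ≤ k) : ∀ a b, a ≤ b → kap k lam b ≤ kap k lam a := by
  intro a b hab
  have h1 : bseq k lam b + b ≤ bseq k lam a + a := by
    have := bseq_le_sub hbound a (b - a)
    rw [show a + (b - a) = b by omega] at this
    have hc : ((b - a : ℕ) : ℤ) = (b:ℤ) - a := by omega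
    omega
  have h2 := kap_cast hbound a
  have h3 := kap_cast hbound b
  omega

lemma kap_zero_of_ge (hbound : ∀ i, lam.rowLen i ≤ k) {i : ℕ} (h : lam.colLen 0 ≤ i) :
    kap k lam i = 0 := by
  unfold kap
  rw [bseq_of_ge h]
  simp

/-- The core built from a `k`-bounded partition. -/
noncomputable def built (k : ℕ) (lam : YoungDiagram) (hbound : ∀ i, lam.rowLen i ≤ k) :
    YoungDiagram :=
  YoungDiagram.ofRowLens ((List.range (lam.colLen 0)).map (kap k lam))
    (sorted_map_range (kap_anti hbound) _)

lemma built_rowLen (hbound : ∀ i, lam.rowLen i ≤ k) (i : ℕ) :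
    (built k lam hbound).rowLen i = kap k lam i := by
  rcases Nat.lt_or_ge i (lam.colLen 0) with hi | hi
  · have hlen : i < ((List.range (lam.colLen 0)).map (kap k lam)).length := by
      simpa using hi
    have := YoungDiagram.rowLen_ofRowLens
      (w := (List.range (lam.colLen 0)).map (kap k lam))
      (hw := sorted_map_range (kap_anti hbound) _) ⟨i, hlen⟩
    rw [built, this]
    simp
  · have h0 : (built k lam hbound).rowLen i = 0 := by
      apply rowLen_zero_of_not_mem
      rw [built]
      intro hmem
      rw [YoungDiagram.mem_ofRowLens] at hmem
      obtain ⟨hlt, -⟩ := hmem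
      simp only [List.length_map, List.length_range] at hlt
      omega
    rw [h0, kap_zero_of_ge hbound hi]

lemma built_bs (hbound : ∀ i, lam.rowLen i ≤ k) (i : ℕ) :
    bs (built k lam hbound) i = bseq k lam i := by
  unfold bs
  rw [built_rowLen hbound]
  have := kap_cast hbound i
  omega

lemma Sset_built (hbound : ∀ i, lam.rowLen i ≤ k) :
    Sset (built k lam hbound) = (stage k lam (lam.colLen 0)).1 := by
  ext x
  rw [Tst_mem_iff]
  constructor
  · rintro ⟨i, rfl⟩
    rw [built_bs hbound]
    rcases Nat.lt_or_ge i (lam.colLen 0) with hi | hi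
    · right
      exact ⟨lam.colLen 0 - i, by omega, by omega, bseq_of_le (le_of_lt hi)⟩
    · left
      rw [bseq_of_ge hi]
      omega
  · rintro (h | ⟨d', h1, h2, h3⟩)
    · refine ⟨(-x).toNat, ?_⟩
      rw [built_bs hbound]
      have hge : lam.colLen 0 ≤ (-x).toNat := by omega
      rw [bseq_of_ge hge]
      omega
    · refine ⟨lam.colLen 0 - d', ?_⟩
      rw [built_bs hbound, bseq_of_le (by omega)]
      rw [show lam.colLen 0 - (lam.colLen 0 - d') = d' by omega]
      exact h3.symm

lemma built_isCore (hbound : ∀ i, lam.rowLen i ≤ k) :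
    (built k lam hbound).IsCore (k+1) := by
  rw [isCore_iff]
  intro l
  rw [Sset_built hbound]
  apply (stInv_all hbound (lam.colLen 0)).adm.sc
  rw [← Sset_built hbound]
  exact ⟨l, rfl⟩

lemma built_rowcount (hbound : ∀ i, lam.rowLen i ≤ k) (i : ℕ) :
    rowcount k (built k lam hbound) i = lam.rowLen i := by
  rcases Nat.lt_or_ge i (lam.colLen 0) with hi | hi
  · set d := lam.colLen 0 - i with hd
    have hd1 : 1 ≤ d := by omega
    have hdL : d ≤ lam.colLen 0 := by omega
    have hiL : i = lam.colLen 0 - d := by omega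
    obtain ⟨hsh, hub, hrk⟩ := stage_step hbound (stInv_all hbound (d - 1))
    have hds : (d - 1) + 1 = d := by omega
    rw [hds] at hsh hub hrk
    have hbseq : bs (built k lam hbound) i = (stage k lam d).2 := by
      rw [built_bs hbound, bseq_of_le (by omega), ← hd]
    rw [rowcount_eq_window, hbseq]
    have hcongr : (Finset.Icc ((stage k lam d).2 - (k:ℤ)) ((stage k lam d).2 - 1)).filter
          (fun x => x ∉ Sset (built k lam hbound))
        = (Finset.Icc ((stage k lam d).2 - (k:ℤ)) ((stage k lam d).2 - 1)).filter
          (fun x => x ∉ (stage k lam (d-1)).1) := by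
      apply Finset.filter_congr
      intro x hx
      rw [Finset.mem_Icc] at hx
      rw [Sset_built hbound]
      have hxlt : x < (stage k lam d).2 := by omega
      rw [not_iff_not]
      rw [Tst_mem_iff, Tst_mem_iff]
      constructor
      · rintro (h | ⟨d'', h1, h2, h3⟩)
        · exact Or.inl h
        · rcases Nat.lt_or_ge (d-1) d'' with hgt | hle
          · exfalso
            have : d ≤ d'' := by omega
            have hmono : (stage k lam d).2 ≤ (stage k lam d'').2 :=
              (gst_strictMono hbound).monotone this
            omega
          · exact Or.inr ⟨d'', h1, hle, h3⟩
      · rintro (h | ⟨d'', h1, h2, h3⟩)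
        · exact Or.inl h
        · exact Or.inr ⟨d'', h1, by omega, h3⟩
    rw [hcongr]
    have := phi_eq_rnk (stInv_all hbound (d-1)).adm hsh hub
    rw [this, hrk, ← hiL]
  · have h0 : (built k lam hbound).rowLen i = 0 := by
      rw [built_rowLen hbound, kap_zero_of_ge hbound hi]
    rw [rowcount_zero_of_rowLen_zero h0, rowLen_eq_zero_of lam hi]

lemma built_coreLength (hbound : ∀ i, lam.rowLen i ≤ k) :
    (built k lam hbound).coreLength k = lam.card := by
  set N := max ((built k lam hbound).colLen 0) (lam.colLen 0) with hN
  rw [coreLength_eq_sum k _ (le_max_left _ _ : (built k lam hbound).colLen 0 ≤ N),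
    card_eq_sum_rowLen lam (le_max_right _ _ : lam.colLen 0 ≤ N)]
  apply Finset.sum_congr rfl
  intro i _
  rw [built_rowcount hbound]

lemma fwd_built (hbound : ∀ i, lam.rowLen i ≤ k) :
    fwd k (built k lam hbound) (built_isCore hbound) = lam := by
  apply ext_rowLen
  intro i
  rw [fwd_rowLen, built_rowcount hbound]

end
end CoreBij

theorem core_kBounded_bijection (k m : ℕ) :
    ∃ e : {κ : YoungDiagram // κ.IsCore (k + 1) ∧ κ.coreLength k = m} ≃
          {lam : YoungDiagram // lam.card = m ∧ ∀ i, lam.rowLen i ≤ k},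
      ∀ κ, ∀ i : ℕ,
        ((e κ : YoungDiagram)).rowLen i
          = ((κ : YoungDiagram).cells.filter
              fun c => c.1 = i ∧ (κ : YoungDiagram).hook c ≤ k).card := by
  classical
  have hfc : ∀ (κ : {κ : YoungDiagram // κ.IsCore (k + 1) ∧ κ.coreLength k = m}),
      (CoreBij.fwd k κ.1 κ.2.1).card = m ∧ ∀ i, (CoreBij.fwd k κ.1 κ.2.1).rowLen i ≤ k := by
    rintro ⟨κ, hc, hlen⟩
    constructor
    · set N := max ((CoreBij.fwd k κ hc).colLen 0) (κ.colLen 0) with hN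
      rw [CoreBij.card_eq_sum_rowLen _ (le_max_left _ _ : (CoreBij.fwd k κ hc).colLen 0 ≤ N)]
      rw [← hlen, CoreBij.coreLength_eq_sum k κ (le_max_right _ _ : κ.colLen 0 ≤ N)]
      apply Finset.sum_congr rfl
      intro i _
      rw [CoreBij.fwd_rowLen]
    · intro i
      rw [CoreBij.fwd_rowLen]
      exact CoreBij.rowcount_le k κ i
  set F : {κ : YoungDiagram // κ.IsCore (k + 1) ∧ κ.coreLength k = m} →
      {lam : YoungDiagram // lam.card = m ∧ ∀ i, lam.rowLen i ≤ k} :=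
    fun κ => ⟨CoreBij.fwd k κ.1 κ.2.1, hfc κ⟩ with hF
  have hbij : Function.Bijective F := by
    constructor
    · rintro ⟨κ, hc, hlen⟩ ⟨κ', hc', hlen'⟩ heq
      simp only [hF, Subtype.mk.injEq] at heq
      apply Subtype.ext
      apply CoreBij.core_inj hc hc'
      intro i
      rw [← CoreBij.fwd_rowLen k κ hc, ← CoreBij.fwd_rowLen k κ' hc', heq]
    · rintro ⟨lam, hm, hb⟩
      refine ⟨⟨CoreBij.built k lam hb, CoreBij.built_isCore hb, ?_⟩, ?_⟩
      · rw [CoreBij.built_coreLength hb, hm]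
      · simp only [hF]
        apply Subtype.ext
        exact CoreBij.fwd_built hb
  refine ⟨Equiv.ofBijective F hbij, ?_⟩
  intro κ i
  have : ((Equiv.ofBijective F hbij) κ : YoungDiagram) = CoreBij.fwd k κ.1 κ.2.1 := rfl
  rw [this, CoreBij.fwd_rowLen]
  rfl
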